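/- Let G be a graph with port set P = pG, let W be a Kekulé state of G with k = W|P, and let p and q be distinct ports of G. Then there exists a subgraph C ⊆ G that is a simple path between p and q such that (C, W) is an alternating curve, if and only if the port assignment k ⊕ {p, q} is Kekulé. -/
import Mathlib


open scoped symmDiff

namespace Kekule

abbrev Node := ℕ
abbrev Graph := Finset (Finset Node)

/-- `G` is a graph: every edge is a 2-element set of nodes. -/
def IsGraph (G : Graph) : Prop := ∀ e ∈ G, e.card = 2

/-- The nodes of a graph: the elements of its edges. -/
def nodes (G : Graph) : Finset Node := G.biUnion id

/-- The number of edges of `G` containing `v`. -/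
def deg (G : Graph) (v : Node) : ℕ := (G.filter (fun e => v ∈ e)).card

/-- A port is a node contained in exactly one edge. -/
def ports (G : Graph) : Finset Node := (nodes G).filter (fun v => deg G v = 1)

/-- An internal node is a node that is not a port. -/
def internal (G : Graph) : Finset Node := (nodes G).filter (fun v => deg G v ≠ 1)

/-- A Kekulé state of `G`: a subgraph `W ⊆ G` such that every internal node
of `G` lies in exactly one edge of `W`. -/
def IsKekule (G W : Graph) : Prop := W ⊆ G ∧ ∀ v ∈ internal G, deg W v = 1

/-- A curve in `G`: a subgraph `C ⊆ G` such that every node of `C` that is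
internal in `G` lies in exactly two edges of `C`. -/
def IsCurve (G C : Graph) : Prop :=
  C ⊆ G ∧ ∀ v ∈ nodes C, v ∈ internal G → deg C v = 2

/-- `(C, W)` is an alternating curve in `G`: both are subgraphs of `G`,
`C` is a curve in `G`, and `W ∩ C` is a Kekulé state of `C`. -/
def IsAlternating (G C W : Graph) : Prop :=
  W ⊆ G ∧ IsCurve G C ∧ IsKekule C (W ∩ C)

/-- `W|P`: the set of ports in `P` that lie in some edge of `W`. -/
def rest (W : Graph) (P : Finset Node) : Finset Node := P ∩ nodes W

/-- The set of Kekulé port assignments of `G`. -/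
def KP (G : Graph) : Set (Finset Node) :=
  {g | ∃ W, IsKekule G W ∧ rest W (ports G) = g}

/-- A cell `K` over `P` is a Kekulé cell if it is the set of Kekulé port
assignments of some graph with port set `P`. -/
def IsKekuleCell (P : Finset Node) (K : Set (Finset Node)) : Prop :=
  ∃ G, IsGraph G ∧ ports G = P ∧ KP G = K

/-- A channel: a 2-element subset of `P`. -/
def IsChannel (P : Finset Node) (c : Finset Node) : Prop := c ⊆ P ∧ c.card = 2

/-- A port `p` is flexible for a cell `K`. -/
def Flexible (K : Set (Finset Node)) (p : Node) : Prop :=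
  ∃ g ∈ K, ∃ g' ∈ K, p ∈ g ∧ p ∉ g'

/-- Hamming distance between two port assignments. -/
def hdist (k k' : Finset Node) : ℕ := (k ∆ k').card

/-- The Hamming diameter of `K` equals `n`. -/
def HamDiamEq (K : Set (Finset Node)) (n : ℕ) : Prop :=
  (∃ k ∈ K, ∃ k' ∈ K, hdist k k' = n) ∧ ∀ k ∈ K, ∀ k' ∈ K, hdist k k' ≤ n

/-- `G` is connected: nonempty, and any two distinct nodes are joined by a walk. -/
def Connected (G : Graph) : Prop :=
  G.Nonempty ∧ ∀ p ∈ nodes G, ∀ q ∈ nodes G, p ≠ q →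
    ∃ (n : ℕ) (f : ℕ → Node), f 0 = p ∧ f n = q ∧
      ∀ i < n, ({f i, f (i + 1)} : Finset Node) ∈ G

/-- `C` is a simple path between `p` and `q`. -/
def IsSimplePath (C : Graph) (p q : Node) : Prop :=
  Connected C ∧ ports C = {p, q} ∧
    ∀ v ∈ nodes C, v ≠ p → v ≠ q → deg C v = 2

/-- A cycle: a connected graph all of whose nodes lie in exactly two edges. -/
def IsCycle (C : Graph) : Prop :=
  Connected C ∧ ∀ v ∈ nodes C, deg C v = 2

/-- A semi-Kekulé state of `G`: every internal node of `G` lies in an odd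
number of edges of `W`. -/
def IsSemiKekule (G W : Graph) : Prop :=
  W ⊆ G ∧ ∀ v ∈ internal G, deg W v % 2 = 1

/-- The signature of `G`. -/
def sig (G : Graph) : ℕ := (internal G).card % 2

/-- `G` is omniconjugated. -/
def Omniconjugated (G : Graph) : Prop :=
  2 ≤ (ports G).card ∧ KP G = {g | g ⊆ ports G ∧ g.card % 2 = sig G}

instance : Std.Commutative (α := Finset Node) (· ∆ ·) := ⟨symmDiff_comm⟩
instance : Std.Associative (α := Finset Node) (· ∆ ·) := ⟨symmDiff_assoc⟩

/-- The `⊕`-sum of a finite family of port assignments. -/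
def xorSum (D : Finset (Finset Node)) : Finset Node := D.fold (· ∆ ·) ∅ id


-- ===== Auxiliary lemmas =====

lemma mem_nodes' {G : Graph} {v : Node} : v ∈ nodes G ↔ ∃ e ∈ G, v ∈ e := by
  simp [nodes]

lemma mem_nodes_iff_deg {G : Graph} {v : Node} : v ∈ nodes G ↔ 0 < deg G v := by
  simp [mem_nodes', deg, Finset.card_pos, Finset.filter_nonempty_iff]

lemma filter_symmDiff' (W C : Graph) (v : Node) :
    (W ∆ C).filter (fun e => v ∈ e) = W.filter (fun e => v ∈ e) ∆ C.filter (fun e => v ∈ e) := by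
  ext e; simp [Finset.mem_symmDiff, Finset.mem_filter]; tauto

lemma filter_inter' (W C : Graph) (v : Node) :
    (W ∩ C).filter (fun e => v ∈ e) = W.filter (fun e => v ∈ e) ∩ C.filter (fun e => v ∈ e) := by
  ext e; simp [Finset.mem_filter]; tauto

lemma card_symmDiff' (s t : Graph) : (s ∆ t).card + 2 * (s ∩ t).card = s.card + t.card := by
  have h1 : s ∆ t = (s ∪ t) \ (s ∩ t) := by
    ext e; simp [Finset.mem_symmDiff]; tauto
  have h2 : (s ∩ t) ⊆ s ∪ t := (Finset.inter_subset_left).trans Finset.subset_union_left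
  have h3 := Finset.card_union_add_card_inter s t
  have h4 := Finset.card_le_card h2
  rw [h1, Finset.card_sdiff_of_subset h2]
  omega

lemma symmDiff_subset_union' (s t : Graph) : s ∆ t ⊆ s ∪ t := by
  intro e he; rw [Finset.mem_symmDiff] at he; simp; tauto

lemma deg_le_of_subset {W G : Graph} (h : W ⊆ G) (v : Node) : deg W v ≤ deg G v :=
  Finset.card_le_card (Finset.filter_subset_filter _ h)

lemma nodes_subset {W G : Graph} (h : W ⊆ G) : nodes W ⊆ nodes G := by
  intro v hv; rw [mem_nodes'] at *; obtain ⟨e, he, hve⟩ := hv; exact ⟨e, h he, hve⟩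

lemma ports_subset_nodes {G : Graph} : ports G ⊆ nodes G := Finset.filter_subset _ _

/-- the unique edge of a port -/
lemma port_edge {G : Graph} {p : Node} (hp : p ∈ ports G) :
    ∃ e₀, e₀ ∈ G ∧ p ∈ e₀ ∧ G.filter (fun e => p ∈ e) = {e₀} := by
  have hdeg : deg G p = 1 := (Finset.mem_filter.1 hp).2
  obtain ⟨e₀, he₀⟩ := Finset.card_eq_one.1 hdeg
  refine ⟨e₀, ?_, ?_, he₀⟩
  · have : e₀ ∈ G.filter (fun e => p ∈ e) := by rw [he₀]; simp
    exact Finset.mem_of_mem_filter _ this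
  · have : e₀ ∈ G.filter (fun e => p ∈ e) := by rw [he₀]; simp
    exact (Finset.mem_filter.1 this).2

lemma port_filter_subset {G H : Graph} {p : Node} {e₀ : Finset Node}
    (hfe : G.filter (fun e => p ∈ e) = {e₀}) (hH : H ⊆ G) :
    H.filter (fun e => p ∈ e) ⊆ {e₀} := by
  intro e he
  have : e ∈ G.filter (fun e => p ∈ e) :=
    Finset.mem_filter.2 ⟨hH (Finset.mem_of_mem_filter _ he), (Finset.mem_filter.1 he).2⟩
  rwa [hfe] at this

lemma port_mem_nodes_iff {G H : Graph} {p : Node} {e₀ : Finset Node}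
    (hpe : p ∈ e₀) (hfe : G.filter (fun e => p ∈ e) = {e₀}) (hH : H ⊆ G) :
    p ∈ nodes H ↔ e₀ ∈ H := by
  constructor
  · intro h
    rw [mem_nodes'] at h
    obtain ⟨e, heH, hpe'⟩ := h
    have : e ∈ ({e₀} : Graph) := port_filter_subset hfe hH (Finset.mem_filter.2 ⟨heH, hpe'⟩)
    rw [Finset.mem_singleton] at this; rwa [this] at heH
  · intro h; exact mem_nodes'.2 ⟨e₀, h, hpe⟩

lemma port_deg {G H : Graph} {p : Node} {e₀ : Finset Node}
    (hpe : p ∈ e₀) (hfe : G.filter (fun e => p ∈ e) = {e₀}) (hH : H ⊆ G) :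
    deg H p = if e₀ ∈ H then 1 else 0 := by
  have hsub := port_filter_subset hfe hH
  rcases Finset.subset_singleton_iff.1 hsub with h | h
  · have : e₀ ∉ H := by
      intro hmem
      have : e₀ ∈ H.filter (fun e => p ∈ e) := Finset.mem_filter.2 ⟨hmem, hpe⟩
      rw [h] at this; simp at this
    simp [deg, h, this]
  · have : e₀ ∈ H := by
      have : e₀ ∈ H.filter (fun e => p ∈ e) := by rw [h]; simp
      exact Finset.mem_of_mem_filter _ this
    simp [deg, h, this]

/-- Walks -/
def Walk (C : Graph) (a b : Node) : Prop :=
  ∃ (n : ℕ) (f : ℕ → Node), f 0 = a ∧ f n = b ∧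
    ∀ i < n, ({f i, f (i + 1)} : Finset Node) ∈ C

lemma Walk.refl' {C : Graph} {a : Node} : Walk C a a :=
  ⟨0, fun _ => a, rfl, rfl, by omega⟩

lemma Walk.edge {C : Graph} {a b : Node} (h : ({a, b} : Finset Node) ∈ C) : Walk C a b := by
  refine ⟨1, fun i => if i = 0 then a else b, by simp, by simp, ?_⟩
  intro i hi
  have : i = 0 := by omega
  subst this; simpa using h

lemma Walk.trans {C : Graph} {a b c : Node} (h1 : Walk C a b) (h2 : Walk C b c) : Walk C a c := by
  obtain ⟨n, f, hf0, hfn, hf⟩ := h1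
  obtain ⟨m, g, hg0, hgm, hg⟩ := h2
  refine ⟨n + m, fun i => if i < n then f i else g (i - n), ?_, ?_, ?_⟩
  · by_cases hn : 0 < n
    · simp [hn, hf0]
    · have : n = 0 := by omega
      subst this; simp [hg0, ← hf0, hfn]
  · have : ¬ (n + m < n) := by omega
    simp [this, hgm]
  · intro i hi
    by_cases h1 : i + 1 < n
    · have h2 : i < n := by omega
      simp only [h1, h2, if_pos]
      exact hf i h2
    · by_cases h3 : i < n
      · have : i + 1 = n := by omega
        simp only [h3, if_pos, h1, if_neg]
        rw [this]; simp only [Nat.sub_self, hg0, ← hfn, ← this]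
        exact hf i h3
      · simp only [h1, h3, if_neg]
        have he : i + 1 - n = (i - n) + 1 := by omega
        rw [he]
        exact hg (i - n) (by omega)

lemma Walk.symm {C : Graph} {a b : Node} (h : Walk C a b) : Walk C b a := by
  obtain ⟨n, f, hf0, hfn, hf⟩ := h
  refine ⟨n, fun i => f (n - i), by simp [hfn], by simp [hf0], ?_⟩
  intro i hi
  have h1 : n - i = (n - (i + 1)) + 1 := by omega
  show ({f (n - i), f (n - (i + 1))} : Finset Node) ∈ C
  rw [Finset.pair_comm, h1]
  exact hf _ (by omega)

lemma Walk.mono {C C' : Graph} {a b : Node} (h : C ⊆ C') (hw : Walk C a b) : Walk C' a b := by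
  obtain ⟨n, f, hf0, hfn, hf⟩ := hw
  exact ⟨n, f, hf0, hfn, fun i hi => h (hf i hi)⟩

lemma connected_iff {C : Graph} :
    Connected C ↔ C.Nonempty ∧ ∀ p ∈ nodes C, ∀ q ∈ nodes C, p ≠ q → Walk C p q :=
  Iff.rfl

/-- Extraction of a simple path from a graph all of whose degrees are 2
except `p` and `q` which have degree 1. -/
lemma path_extract : ∀ (n : ℕ) (D : Graph), D.card ≤ n → IsGraph D → ∀ p q : Node, p ≠ q →
    deg D p = 1 → deg D q = 1 → (∀ v ∈ nodes D, v ≠ p → v ≠ q → deg D v = 2) →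
    ∃ C, C ⊆ D ∧ IsSimplePath C p q := by
  intro n
  induction n with
  | zero =>
    intro D hcard _ p q _ hp _ _
    have : D = ∅ := Finset.card_eq_zero.1 (by omega)
    subst this; simp [deg] at hp
  | succ n ih =>
    intro D hcard hDgraph p q hpq hp hq hother
    -- the unique edge at p
    obtain ⟨e, he⟩ := Finset.card_eq_one.1 hp
    have heD : e ∈ D := by
      have : e ∈ D.filter (fun e => p ∈ e) := by rw [he]; simp
      exact Finset.mem_of_mem_filter _ this
    have hpe : p ∈ e := by
      have : e ∈ D.filter (fun e => p ∈ e) := by rw [he]; simp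
      exact (Finset.mem_filter.1 this).2
    obtain ⟨a, b, hab, heab⟩ := Finset.card_eq_two.1 (hDgraph e heD)
    -- e = {p, x}
    obtain ⟨x, hxp, hepx⟩ : ∃ x, x ≠ p ∧ e = {p, x} := by
      subst heab
      rcases Finset.mem_insert.1 hpe with h | h
      · exact ⟨b, by rw [← h] at hab; exact fun hh => hab hh.symm, by rw [h]⟩
      · rw [Finset.mem_singleton] at h
        exact ⟨a, by rw [← h] at hab; exact hab, by rw [h, Finset.pair_comm]⟩
    have hxe : x ∈ e := by rw [hepx]; simp
    by_cases hxq : x = q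
    · -- single edge path
      subst hxq
      refine ⟨{e}, by simpa using heD, ?_, ?_, ?_⟩
      · refine ⟨⟨e, by simp⟩, ?_⟩
        intro u hu v hv huv
        have hn : nodes {e} = e := by simp [nodes]
        rw [hn, hepx] at hu hv
        have hw : Walk {e} p x := Walk.edge (by rw [← hepx]; simp)
        have hu' : u = p ∨ u = x := by simpa using hu
        have hv' : v = p ∨ v = x := by simpa using hv
        rcases hu' with h | h <;> rcases hv' with h' | h'
        · exact absurd (h.trans h'.symm) huv
        · rw [h, h']; exact hw
        · rw [h, h']; exact hw.symm
        · exact absurd (h.trans h'.symm) huv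
      · ext v
        have hn : nodes {e} = e := by simp [nodes]
        simp only [ports, Finset.mem_filter, hn]
        constructor
        · rintro ⟨hv, -⟩; rwa [hepx] at hv
        · intro hv
          have hv' : v ∈ e := by rw [hepx]; exact hv
          refine ⟨hv', ?_⟩
          simp only [deg, Finset.filter_singleton, if_pos hv']
          simp
      · intro v hv hvp hvq
        have hn : nodes {e} = e := by simp [nodes]
        rw [hn, hepx] at hv
        rcases Finset.mem_insert.1 hv with h | h
        · exact absurd h hvp
        · exact absurd (Finset.mem_singleton.1 h) hvq
    · -- recurse on D.erase e
      set D' := D.erase e with hD'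
      have hD'sub : D' ⊆ D := Finset.erase_subset _ _
      have hfilter : ∀ v : Node, D'.filter (fun f => v ∈ f) = (D.filter (fun f => v ∈ f)).erase e := by
        intro v; rw [hD', Finset.filter_erase]
      have hdegp' : deg D' p = 0 := by
        rw [deg, hfilter, he]; simp
      have hpnotin' : p ∉ nodes D' := by
        rw [mem_nodes_iff_deg, hdegp']; omega
      have hqe : q ∉ e := by
        rw [hepx]; simp
        exact ⟨fun h => hpq h.symm, fun h => hxq h.symm⟩
      have hdegq' : deg D' q = 1 := by
        rw [deg, hfilter, Finset.erase_eq_of_notMem, ← deg, hq]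
        simp [hqe]
      have hxD : x ∈ nodes D := mem_nodes'.2 ⟨e, heD, hxe⟩
      have hdegx : deg D x = 2 := hother x hxD hxp hxq
      have hdegx' : deg D' x = 1 := by
        rw [deg, hfilter, Finset.card_erase_of_mem (Finset.mem_filter.2 ⟨heD, hxe⟩), ← deg, hdegx]
      have hother' : ∀ v ∈ nodes D', v ≠ x → v ≠ q → deg D' v = 2 := by
        intro v hv hvx hvq
        have hvp : v ≠ p := by rintro rfl; exact hpnotin' hv
        have hve : v ∉ e := by
          rw [hepx]; simp; exact ⟨hvp, hvx⟩
        have hvD : v ∈ nodes D := nodes_subset hD'sub hv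
        rw [deg, hfilter, Finset.erase_eq_of_notMem (by simp [hve]), ← deg]
        exact hother v hvD hvp hvq
      have hcard' : D'.card ≤ n := by
        rw [hD', Finset.card_erase_of_mem heD]
        omega
      obtain ⟨C', hC'sub, hC'conn, hC'ports, hC'deg⟩ :=
        ih D' hcard' (fun f hf => hDgraph f (hD'sub hf)) x q hxq hdegx' hdegq' hother'
      -- assemble
      have hpC' : p ∉ nodes C' := fun h => hpnotin' (nodes_subset hC'sub h)
      have heC' : e ∉ C' := fun h => hpC' (mem_nodes'.2 ⟨e, h, hpe⟩)
      set C := insert e C' with hC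
      have hnodesC : nodes C = e ∪ nodes C' := by
        rw [hC, nodes, Finset.biUnion_insert]; rfl
      have hdegC : ∀ v, deg C v = (if v ∈ e then 1 else 0) + deg C' v := by
        intro v
        by_cases hv : v ∈ e
        · rw [hC, deg, Finset.filter_insert, if_pos hv,
            Finset.card_insert_of_notMem (fun h => heC' (Finset.mem_of_mem_filter _ h))]
          simp [hv, deg]; omega
        · rw [hC, deg, Finset.filter_insert, if_neg hv]; simp [deg, hv]
      have hxC' : x ∈ nodes C' := by
        have : x ∈ ports C' := by rw [hC'ports]; simp
        exact ports_subset_nodes this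
      have hqC' : q ∈ nodes C' := by
        have : q ∈ ports C' := by rw [hC'ports]; simp
        exact ports_subset_nodes this
      have hdegC'x : deg C' x = 1 := by
        have : x ∈ ports C' := by rw [hC'ports]; simp
        exact (Finset.mem_filter.1 this).2
      have hdegC'q : deg C' q = 1 := by
        have : q ∈ ports C' := by rw [hC'ports]; simp
        exact (Finset.mem_filter.1 this).2
      have hdegC'p : deg C' p = 0 := by
        by_contra h
        exact hpC' (mem_nodes_iff_deg.2 (by omega))
      have hdegCp : deg C p = 1 := by rw [hdegC, if_pos hpe, hdegC'p]
      have hdegCq : deg C q = 1 := by rw [hdegC, if_neg hqe, hdegC'q]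
      have hdegCx : deg C x = 2 := by rw [hdegC, if_pos hxe, hdegC'x]
      have hdegCother : ∀ v ∈ nodes C, v ≠ p → v ≠ q → deg C v = 2 := by
        intro v hv hvp hvq
        by_cases hvx : v = x
        · subst hvx; exact hdegCx
        · have hvC' : v ∈ nodes C' := by
            rw [hnodesC] at hv
            rcases Finset.mem_union.1 hv with h | h
            · rw [hepx] at h
              rcases Finset.mem_insert.1 h with h' | h'
              · exact absurd h' hvp
              · exact absurd (Finset.mem_singleton.1 h') hvx
            · exact h
          have hve : v ∉ e := by rw [hepx]; simp; exact ⟨hvp, hvx⟩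
          rw [hdegC, if_neg hve, Nat.zero_add]
          exact hC'deg v hvC' hvx hvq
      refine ⟨C, ?_, ⟨?_, ?_⟩, ?_, hdegCother⟩
      · rw [hC]
        exact Finset.insert_subset heD (hC'sub.trans hD'sub)
      · exact ⟨e, by rw [hC]; simp⟩
      · -- connectivity
        have hwalkC' : ∀ a ∈ nodes C', Walk C' x a := by
          intro a ha
          by_cases hax : x = a
          · subst hax; exact Walk.refl'
          · exact hC'conn.2 x hxC' a ha hax
        have hC'C : C' ⊆ C := by rw [hC]; exact Finset.subset_insert _ _
        have hwalk : ∀ a ∈ nodes C, Walk C p a := by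
          intro a ha
          rw [hnodesC] at ha
          rcases Finset.mem_union.1 ha with h | h
          · rw [hepx] at h
            rcases Finset.mem_insert.1 h with h' | h'
            · subst h'; exact Walk.refl'
            · rw [Finset.mem_singleton.1 h']
              exact Walk.edge (by rw [← hepx, hC]; simp)
          · exact (Walk.edge (a := p) (b := x) (by rw [← hepx, hC]; simp)).trans
              ((hwalkC' a h).mono hC'C)
        intro u hu v hv huv
        exact (hwalk u hu).symm.trans (hwalk v hv)
      · -- ports C = {p, q}
        ext v
        simp only [ports, Finset.mem_filter]
        constructor
        · rintro ⟨hv, hdv⟩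
          by_contra hvpq
          simp only [Finset.mem_insert, Finset.mem_singleton] at hvpq
          push_neg at hvpq
          rw [hdegCother v hv hvpq.1 hvpq.2] at hdv
          omega
        · intro hv
          rcases Finset.mem_insert.1 hv with h | h
          · subst h
            exact ⟨by rw [hnodesC]; exact Finset.mem_union_left _ hpe, hdegCp⟩
          · rw [Finset.mem_singleton.1 h]
            exact ⟨by rw [hnodesC]; exact Finset.mem_union_right _ hqC', hdegCq⟩

/-- There is a simple alternating path `(C, W)` between the
distinct ports `p` and `q` if and only if the port assignment `k ⊕ {p, q}`
is Kekulé. -/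
theorem statement3 (G : Graph) (hG : IsGraph G)
    (W : Graph) (hW : IsKekule G W)
    (k : Finset Node) (hk : k = rest W (ports G))
    (p q : Node) (hp : p ∈ ports G) (hq : q ∈ ports G) (hpq : p ≠ q) :
    (∃ C : Graph, C ⊆ G ∧ IsSimplePath C p q ∧ IsAlternating G C W) ↔
      (k ∆ ({p, q} : Finset Node)) ∈ KP G := by
  obtain ⟨hWG, hWdeg⟩ := hW
  obtain ⟨ep, hepG, hpep, hfp⟩ := port_edge hp
  obtain ⟨eq', heqG, hqeq, hfq⟩ := port_edge hq
  have hport_not_internal : ∀ r ∈ ports G, r ∉ internal G := by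
    intro r hr hint
    exact (Finset.mem_filter.1 hint).2 (Finset.mem_filter.1 hr).2
  constructor
  · rintro ⟨C, hCG, ⟨hCconn, hCports, hCdeg⟩, hWG', ⟨hCG2, hcurve⟩, hWCsub, hWCdeg⟩
    have hsub : W ∆ C ⊆ G := (symmDiff_subset_union' W C).trans (Finset.union_subset hWG hCG)
    refine ⟨W ∆ C, ⟨hsub, ?_⟩, ?_⟩
    · intro v hv
      have hvW : deg W v = 1 := hWdeg v hv
      have hdf : deg (W ∆ C) v
          = ((W.filter (fun e => v ∈ e)) ∆ (C.filter (fun e => v ∈ e))).card := by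
        rw [deg, filter_symmDiff']
      by_cases hvC : v ∈ nodes C
      · have hdC : deg C v = 2 := hcurve v hvC hv
        have hvintC : v ∈ internal C := Finset.mem_filter.2 ⟨hvC, by rw [hdC]; omega⟩
        have hWC : deg (W ∩ C) v = 1 := hWCdeg v hvintC
        have hint : ((W.filter (fun e => v ∈ e)) ∩ (C.filter (fun e => v ∈ e))).card = 1 := by
          rw [← filter_inter']; exact hWC
        have hcs := card_symmDiff' (W.filter (fun e => v ∈ e)) (C.filter (fun e => v ∈ e))
        rw [deg] at hvW hdC
        rw [hdf]
        omega
      · have hdC : deg C v = 0 := by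
          by_contra h
          exact hvC (mem_nodes_iff_deg.2 (by omega))
        have hCf : C.filter (fun e => v ∈ e) = ∅ := Finset.card_eq_zero.1 hdC
        have hemp : (W.filter (fun e => v ∈ e)) ∆ (∅ : Graph) = W.filter (fun e => v ∈ e) := by
          ext f; simp [Finset.mem_symmDiff]
        rw [hdf, hCf, hemp]
        exact hvW
    · rw [hk]
      ext r
      by_cases hrP : r ∈ ports G
      · obtain ⟨e₀, he₀G, hre₀, hf₀⟩ := port_edge hrP
        have h1 : r ∈ nodes (W ∆ C) ↔ e₀ ∈ W ∆ C := port_mem_nodes_iff hre₀ hf₀ hsub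
        have h2 : r ∈ nodes W ↔ e₀ ∈ W := port_mem_nodes_iff hre₀ hf₀ hWG
        have h3 : r ∈ nodes C ↔ e₀ ∈ C := port_mem_nodes_iff hre₀ hf₀ hCG
        have h4 : r ∈ ({p, q} : Finset Node) ↔ e₀ ∈ C := by
          rw [← h3]
          constructor
          · intro h
            rcases Finset.mem_insert.1 h with h | h
            · subst h; exact ports_subset_nodes (by rw [hCports]; simp)
            · rw [Finset.mem_singleton.1 h]
              exact ports_subset_nodes (by rw [hCports]; simp)
          · intro h
            have hd1 : deg C r ≤ 1 :=
              (deg_le_of_subset hCG r).trans_eq (Finset.mem_filter.1 hrP).2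
            have hd2 : 0 < deg C r := mem_nodes_iff_deg.1 h
            have : r ∈ ports C := Finset.mem_filter.2 ⟨h, by omega⟩
            rw [hCports] at this; exact this
        by_cases hew : e₀ ∈ W <;> by_cases hec : e₀ ∈ C <;>
          simp [rest, Finset.mem_symmDiff, Finset.mem_inter, hrP, h1, h2, h4, hew, hec]
      · have hrp : r ≠ p := fun h => hrP (h ▸ hp)
        have hrq : r ≠ q := fun h => hrP (h ▸ hq)
        simp [rest, Finset.mem_symmDiff, Finset.mem_inter, hrP, hrp, hrq]
  · rintro ⟨W', ⟨hW'G, hW'deg⟩, hrest⟩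
    set D := W ∆ W' with hD
    have hDG : D ⊆ G := (symmDiff_subset_union' W W').trans (Finset.union_subset hWG hW'G)
    -- degree of p in D
    have hkW : ∀ r (e₀ : Finset Node), r ∈ ports G → r ∈ e₀ →
        G.filter (fun e => r ∈ e) = {e₀} → (r ∈ k ↔ e₀ ∈ W) := by
      intro r e₀ hr hre hf
      rw [hk, rest, Finset.mem_inter]
      simp [hr, port_mem_nodes_iff hre hf hWG]
    have hkW' : ∀ r (e₀ : Finset Node), r ∈ ports G → r ∈ e₀ →
        G.filter (fun e => r ∈ e) = {e₀} → (r ∈ k ∆ ({p, q} : Finset Node) ↔ e₀ ∈ W') := by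
      intro r e₀ hr hre hf
      rw [← hrest, rest, Finset.mem_inter]
      simp [hr, port_mem_nodes_iff hre hf hW'G]
    have hdegDp : deg D p = 1 := by
      have h1 := hkW p ep hp hpep hfp
      have h2 := hkW' p ep hp hpep hfp
      rw [Finset.mem_symmDiff] at h2
      simp only [Finset.mem_insert, Finset.mem_singleton, true_or] at h2
      have hmem : ep ∈ D := by
        rw [hD, Finset.mem_symmDiff]; tauto
      rw [port_deg hpep hfp hDG, if_pos hmem]
    have hdegDq : deg D q = 1 := by
      have h1 := hkW q eq' hq hqeq hfq
      have h2 := hkW' q eq' hq hqeq hfq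
      rw [Finset.mem_symmDiff] at h2
      simp only [Finset.mem_insert, Finset.mem_singleton, or_true] at h2
      have hmem : eq' ∈ D := by
        rw [hD, Finset.mem_symmDiff]; tauto
      rw [port_deg hqeq hfq hDG, if_pos hmem]
    have hDports : ∀ v ∈ nodes D, v ≠ p → v ≠ q → v ∉ ports G := by
      intro v hv hvp hvq hvP
      obtain ⟨e₀, he₀G, hve₀, hf₀⟩ := port_edge hvP
      have h2 := hkW v e₀ hvP hve₀ hf₀
      have h3 := hkW' v e₀ hvP hve₀ hf₀
      rw [Finset.mem_symmDiff] at h3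
      simp only [Finset.mem_insert, Finset.mem_singleton, hvp, hvq, or_self] at h3
      have hdeg0 : deg D v = 0 := by
        rw [port_deg hve₀ hf₀ hDG, if_neg]
        rw [hD, Finset.mem_symmDiff]
        tauto
      have := mem_nodes_iff_deg.1 hv
      omega
    have hinternal : ∀ v ∈ nodes D, v ≠ p → v ≠ q → v ∈ internal G := by
      intro v hv hvp hvq
      have hvG : v ∈ nodes G := nodes_subset hDG hv
      have hvP := hDports v hv hvp hvq
      exact Finset.mem_filter.2 ⟨hvG, fun h => hvP (Finset.mem_filter.2 ⟨hvG, h⟩)⟩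
    have hDother : ∀ v ∈ nodes D, v ≠ p → v ≠ q → deg D v = 2 := by
      intro v hv hvp hvq
      have hvint := hinternal v hv hvp hvq
      have h1 : deg W v = 1 := hWdeg v hvint
      have h2 : deg W' v = 1 := hW'deg v hvint
      have hcs := card_symmDiff' (W.filter (fun e => v ∈ e)) (W'.filter (fun e => v ∈ e))
      have hle : ((W.filter (fun e => v ∈ e)) ∩ (W'.filter (fun e => v ∈ e))).card
          ≤ (W.filter (fun e => v ∈ e)).card :=
        Finset.card_le_card Finset.inter_subset_left
      have hdf : deg D v
          = ((W.filter (fun e => v ∈ e)) ∆ (W'.filter (fun e => v ∈ e))).card := by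
        rw [hD, deg, filter_symmDiff']
      have hpos : 0 < deg D v := mem_nodes_iff_deg.1 hv
      rw [deg] at h1 h2
      omega
    obtain ⟨C, hCD, hSP⟩ := path_extract D.card D le_rfl
      (fun e he => hG e (hDG he)) p q hpq hdegDp hdegDq hDother
    obtain ⟨hCconn, hCports, hCdeg⟩ := hSP
    have hCG : C ⊆ G := hCD.trans hDG
    refine ⟨C, hCG, ⟨hCconn, hCports, hCdeg⟩, hWG, ⟨hCG, ?_⟩, Finset.inter_subset_right, ?_⟩
    · intro v hvC hvint
      have hvp : v ≠ p := by rintro rfl; exact hport_not_internal v hp hvint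
      have hvq : v ≠ q := by rintro rfl; exact hport_not_internal v hq hvint
      exact hCdeg v hvC hvp hvq
    · intro v hvint
      obtain ⟨hvC, hvdeg⟩ := Finset.mem_filter.1 hvint
      have hports_deg : ∀ r, r ∈ ports C → deg C r = 1 := fun r hr => (Finset.mem_filter.1 hr).2
      have hvp : v ≠ p := by
        intro h
        apply hvdeg
        rw [h]
        exact hports_deg p (by rw [hCports]; simp)
      have hvq : v ≠ q := by
        intro h
        apply hvdeg
        rw [h]
        exact hports_deg q (by rw [hCports]; simp)
      have hdC : deg C v = 2 := hCdeg v hvC hvp hvq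
      have hvD : v ∈ nodes D := nodes_subset hCD hvC
      have hvintG := hinternal v hvD hvp hvq
      have h1 : deg W v = 1 := hWdeg v hvintG
      have h2 : deg W' v = 1 := hW'deg v hvintG
      have hdD : deg D v = 2 := hDother v hvD hvp hvq
      have hfD : D.filter (fun e => v ∈ e)
          = (W.filter (fun e => v ∈ e)) ∆ (W'.filter (fun e => v ∈ e)) := by
        rw [hD, filter_symmDiff']
      have hfCD : C.filter (fun e => v ∈ e) ⊆ D.filter (fun e => v ∈ e) :=
        Finset.filter_subset_filter _ hCD
      have hfeq : C.filter (fun e => v ∈ e) = D.filter (fun e => v ∈ e) := by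
        apply Finset.eq_of_subset_of_card_le hfCD
        rw [← deg, ← deg, hdC, hdD]
      have hWW' : ((W.filter (fun e => v ∈ e)) ∩ (W'.filter (fun e => v ∈ e))).card = 0 := by
        have hcs := card_symmDiff' (W.filter (fun e => v ∈ e)) (W'.filter (fun e => v ∈ e))
        rw [deg] at h1 h2
        have : deg D v = ((W.filter (fun e => v ∈ e)) ∆ (W'.filter (fun e => v ∈ e))).card := by
          rw [deg, hfD]
        omega
      have hsd : (W.filter (fun e => v ∈ e))
            ∩ ((W.filter (fun e => v ∈ e)) ∆ (W'.filter (fun e => v ∈ e)))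
          = (W.filter (fun e => v ∈ e)) \ (W'.filter (fun e => v ∈ e)) := by
        ext f; simp [Finset.mem_symmDiff]; tauto
      have hcis := Finset.card_inter_add_card_sdiff
        (W.filter (fun e => v ∈ e)) (W'.filter (fun e => v ∈ e))
      rw [deg, filter_inter', hfeq, hfD, hsd]
      rw [deg] at h1
      omega

end Kekule
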